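/- Let n ≥ 1, let c ∈ ℝ, let K₀, K₁,…,Kₙ : ℝ² → ℝ be twice continuously differentiable with compact support, and let Q : (ℝ²)^{n+1} → ℝ be bounded, continuous, and translation-invariant. Then for every w ∈ ℝ²: ∫_{(ℝ²)^{n+1}} Q(z₀,…,zₙ) (∂_x K₀)(z₀ − w) Σ_{i=1}^n (L_c K_i)(w − z_i) ∏_{k≠i} K_k(w − z_k) dz₀ ⋯ dzₙ = ∫_{(ℝ²)^{n+1}} Q(z₀,…,zₙ) (L_c K₀)(z₀ − w) Σ_{i=1}^n (∂_x K_i)(w − z_i) ∏_{k≠i} K_k(w − z_k) dz₀ ⋯ dzₙ + c ∫_{(ℝ²)^{n+1}} Q(z₀,…,zₙ) (∂_x K₀)(z₀ − w) Σ_{i≠j} (∂_x K_i)(w − z_i)(∂_x K_j)(w − z_j) ∏_{k∉{i,j}} K_k(w − z_k) dz₀ ⋯ dzₙ, where the last sum runs over all ordered pairs (i,j) with i ≠ j. -/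

import Mathlib

open MeasureTheory Finset

/-- Partial derivative in the first ("time") coordinate of `ℝ × ℝ`. -/
noncomputable def pt (f : ℝ × ℝ → ℝ) (w : ℝ × ℝ) : ℝ := fderiv ℝ f w (1, 0)

/-- Partial derivative in the second ("space") coordinate of `ℝ × ℝ`. -/
noncomputable def px (f : ℝ × ℝ → ℝ) (w : ℝ × ℝ) : ℝ := fderiv ℝ f w (0, 1)

/-- The parabolic operator `L_c f = ∂_t f − c ∂_x² f`. -/
noncomputable def Lop (c : ℝ) (f : ℝ × ℝ → ℝ) : ℝ × ℝ → ℝ :=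
  fun w => pt f w - c * px (px f) w



abbrev PP : Type := ℝ × ℝ
abbrev SP (n : ℕ) : Type := PP × (Fin n → PP)

lemma sp_shift_integral {n : ℕ} (f : SP n → ℝ) (h : SP n) :
    ∫ z, f (z + h) = ∫ z, f z := by
  haveI : (volume : Measure (SP n)).IsAddLeftInvariant := Measure.prod.instIsAddLeftInvariant
  simp_rw [add_comm _ h]
  exact integral_add_left_eq_self (μ := volume) f h

lemma hcs_of_sets {n : ℕ} {T₀ : Set PP} {T : Fin n → Set PP}
    (h₀ : IsCompact T₀) (hT : ∀ i, IsCompact (T i)) {f : SP n → ℝ}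
    (hf : ∀ z : SP n, f z ≠ 0 → z.1 ∈ T₀ ∧ ∀ i, z.2 i ∈ T i) :
    HasCompactSupport f := by
  apply HasCompactSupport.intro (h₀.prod (isCompact_univ_pi hT))
  intro z hz
  by_contra hfz
  obtain ⟨h1, h2⟩ := hf z hfz
  exact hz (Set.mem_prod.2 ⟨h1, Set.mem_univ_pi.2 h2⟩)

lemma cont_fderiv_apply {g : PP → ℝ} (hg : ContDiff ℝ 1 g) (e : PP) :
    Continuous fun x => fderiv ℝ g x e :=
  ((ContinuousLinearMap.apply ℝ ℝ e).continuous).comp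
    (hg.fderiv_right (m := 0) (by norm_num)).continuous

lemma hcs_fderiv_apply {g : PP → ℝ} (hgs : HasCompactSupport g) (e : PP) :
    HasCompactSupport fun x => fderiv ℝ g x e :=
  (hgs.fderiv ℝ).comp_left (g := fun L : PP →L[ℝ] ℝ => L e) rfl

lemma fderiv_apply_zero_outside {g : PP → ℝ} {x : PP} (hx : x ∉ tsupport g) (e : PP) :
    fderiv ℝ g x e = 0 := by
  have h : fderiv ℝ g x = 0 := by
    by_contra h
    exact hx (support_fderiv_subset ℝ (Function.mem_support.2 h))
  simp [h]

lemma cont_shape {n : ℕ} {a : PP → ℝ} (ha : Continuous a)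
    {b : Fin n → PP → ℝ} (hb : ∀ i, Continuous (b i)) (p q : PP) :
    Continuous fun z : SP n => a (z.1 - p) * ∏ i, b i (q - z.2 i) :=
  (ha.comp (continuous_fst.sub continuous_const)).mul
    (continuous_finset_prod _ fun i _ =>
      (hb i).comp (continuous_const.sub ((continuous_apply i).comp continuous_snd)))

lemma hcs_shape {n : ℕ} {a : PP → ℝ} (hacs : HasCompactSupport a)
    {b : Fin n → PP → ℝ} (hbcs : ∀ i, HasCompactSupport (b i)) (p q : PP) :
    HasCompactSupport fun z : SP n => a (z.1 - p) * ∏ i, b i (q - z.2 i) := by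
  apply hcs_of_sets (T₀ := (· + p) '' tsupport a)
    (T := fun i => (q - ·) '' tsupport (b i))
    (hacs.image (continuous_id.add continuous_const))
    (fun i => (hbcs i).image (continuous_const.sub continuous_id))
  intro z hz
  rw [mul_ne_zero_iff] at hz
  obtain ⟨h1, h2⟩ := hz
  constructor
  · exact ⟨z.1 - p, subset_tsupport _ h1, by simp⟩
  · intro i
    have : b i (q - z.2 i) ≠ 0 := by
      intro h0
      exact h2 (Finset.prod_eq_zero (mem_univ i) h0)
    exact ⟨q - z.2 i, subset_tsupport _ this, by simp⟩

lemma integrable_shape {n : ℕ} {Q : SP n → ℝ} (hQc : Continuous Q) {M : ℝ}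
    (hQbd : ∀ z, |Q z| ≤ M) {a : PP → ℝ} (ha : Continuous a) (hacs : HasCompactSupport a)
    {b : Fin n → PP → ℝ} (hb : ∀ i, Continuous (b i)) (hbcs : ∀ i, HasCompactSupport (b i))
    (p q : PP) :
    Integrable (fun z : SP n => Q z * (a (z.1 - p) * ∏ i, b i (q - z.2 i))) :=
  haveI : IsFiniteMeasureOnCompacts (volume : Measure (SP n)) :=
    MeasureTheory.Measure.prod.instIsFiniteMeasureOnCompacts volume volume
  ((cont_shape ha hb p q).integrable_of_hasCompactSupport (hcs_shape hacs hbcs p q)).bdd_mul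
    hQc.aestronglyMeasurable (c := M) (ae_of_all _ fun z => by simpa [Real.norm_eq_abs] using hQbd z)

lemma prod_update_eq {n : ℕ} (b : Fin n → PP → ℝ) (i : Fin n) (f : PP → ℝ) (v : Fin n → PP) :
    ∏ k, Function.update b i f k (v k)
      = f (v i) * ∏ k ∈ univ.erase i, b k (v k) := by
  have h : ∀ k, Function.update b i f k (v k)
      = Function.update (fun k => b k (v k)) i (f (v i)) k := by
    intro k
    rcases eq_or_ne k i with hk | hk
    · subst hk; simp
    · simp [Function.update_of_ne hk]
  rw [Finset.prod_congr rfl fun k _ => h k, Finset.prod_update_of_mem (mem_univ i),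
    Finset.erase_eq]

lemma prod_update_eq_erase {n : ℕ} (b : Fin n → PP → ℝ) (i j : Fin n) (hij : i ≠ j)
    (f : PP → ℝ) (v : Fin n → PP) :
    ∏ k ∈ univ.erase j, Function.update b i f k (v k)
      = f (v i) * ∏ k ∈ (univ.erase j).erase i, b k (v k) := by
  have h : ∀ k, Function.update b i f k (v k)
      = Function.update (fun k => b k (v k)) i (f (v i)) k := by
    intro k
    rcases eq_or_ne k i with hk | hk
    · subst hk; simp
    · simp [Function.update_of_ne hk]
  rw [Finset.prod_congr rfl fun k _ => h k,
    Finset.prod_update_of_mem (Finset.mem_erase.2 ⟨hij, mem_univ i⟩)]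
  simp [Finset.erase_eq]

lemma update_prop {n : ℕ} {P : (PP → ℝ) → Prop} {g : Fin n → PP → ℝ}
    (hg : ∀ i, P (g i)) {i : Fin n} {f : PP → ℝ} (hf : P f) :
    ∀ j, P (Function.update g i f j) := by
  intro j
  rcases eq_or_ne j i with h | h
  · subst h; simpa using hf
  · simpa [Function.update_of_ne h] using hg j

lemma lemA {n : ℕ} {Q : SP n → ℝ} {M : ℝ}
    (hQbd : ∀ z, |Q z| ≤ M) (hQcont : Continuous Q)
    (hQinv : ∀ (h z₀ : PP) (zz : Fin n → PP), Q (z₀ + h, fun i => zz i + h) = Q (z₀, zz))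
    (e w : PP) {g₀ : PP → ℝ} {g : Fin n → PP → ℝ}
    (hg₀ : ContDiff ℝ 1 g₀) (hg₀s : HasCompactSupport g₀)
    (hg : ∀ i, ContDiff ℝ 1 (g i)) (hgs : ∀ i, HasCompactSupport (g i)) :
    ∫ z : SP n, Q z * (fderiv ℝ g₀ (z.1 - w) e * ∏ i, g i (w - z.2 i))
      = ∫ z : SP n, Q z * (g₀ (z.1 - w) *
          ∑ i, fderiv ℝ (g i) (w - z.2 i) e * ∏ k ∈ univ.erase i, g k (w - z.2 k)) := by
  classical
  haveI : IsFiniteMeasureOnCompacts (volume : Measure (SP n)) :=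
    MeasureTheory.Measure.prod.instIsFiniteMeasureOnCompacts volume volume
  set F : ℝ → SP n → ℝ := fun s z =>
    Q z * (g₀ (z.1 - (w + s • e)) * ∏ i, g i ((w + s • e) - z.2 i)) with hFdef
  set F' : ℝ → SP n → ℝ := fun s z =>
    Q z * (-(fderiv ℝ g₀ (z.1 - (w + s • e)) e) * ∏ i, g i ((w + s • e) - z.2 i)
      + g₀ (z.1 - (w + s • e)) * ∑ i, fderiv ℝ (g i) ((w + s • e) - z.2 i) e
          * ∏ k ∈ univ.erase i, g k ((w + s • e) - z.2 k)) with hF'def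
  -- constancy in s
  have hconst : ∀ s : ℝ, ∫ z, F s z = ∫ z, F 0 z := by
    intro s
    rw [← sp_shift_integral (F s) (s • e, fun _ => s • e)]
    congr 1
    funext z
    calc F s (z + (s • e, fun _ => s • e))
        = Q (z.1 + s • e, fun i => z.2 i + s • e) *
          (g₀ (z.1 + s • e - (w + s • e)) * ∏ i, g i ((w + s • e) - (z.2 i + s • e))) := rfl
      _ = Q z * (g₀ (z.1 - (w + (0:ℝ) • e)) * ∏ i, g i ((w + (0:ℝ) • e) - z.2 i)) := by
          rw [hQinv (s • e) z.1 z.2]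
          congr 1
          congr 1
          · congr 1; module
          · apply Finset.prod_congr rfl; intro i _; congr 1; module
      _ = F 0 z := rfl
  -- derivative in s
  have hder : ∀ (z : SP n) (s : ℝ), HasDerivAt (fun s => F s z) (F' s z) s := by
    intro z s
    have hin0 : HasDerivAt (fun s : ℝ => z.1 - (w + s • e)) (-e) s := by
      simpa using (((hasDerivAt_id s).smul_const e).const_add w).const_sub z.1
    have h0 : HasDerivAt (fun s : ℝ => g₀ (z.1 - (w + s • e)))
        (-(fderiv ℝ g₀ (z.1 - (w + s • e)) e)) s := by
      have := ((hg₀.differentiable one_ne_zero) (z.1 - (w + s • e))).hasFDerivAt.comp_hasDerivAt s hin0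
      simpa [map_neg, Function.comp_def] using this
    have hgi : ∀ i, HasDerivAt (fun s : ℝ => g i ((w + s • e) - z.2 i))
        (fderiv ℝ (g i) ((w + s • e) - z.2 i) e) s := by
      intro i
      have hini : HasDerivAt (fun s : ℝ => (w + s • e) - z.2 i) e s := by
        simpa using (((hasDerivAt_id s).smul_const e).const_add w).sub_const (z.2 i)
      exact (((hg i).differentiable one_ne_zero) _).hasFDerivAt.comp_hasDerivAt s hini
    have hprod : HasDerivAt (fun s : ℝ => ∏ i, g i ((w + s • e) - z.2 i))
        (∑ i, (∏ k ∈ univ.erase i, g k ((w + s • e) - z.2 k)) •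
          fderiv ℝ (g i) ((w + s • e) - z.2 i) e) s :=
      HasDerivAt.fun_finsetProd fun i _ => hgi i
    have hmul := (h0.mul hprod).const_mul (Q z)
    have hmul' : HasDerivAt (fun s => F s z) _ s := hmul
    convert hmul' using 1
    simp only [hF'def, smul_eq_mul]
    have hsc : (∑ i, (∏ k ∈ univ.erase i, g k ((w + s • e) - z.2 k))
        * fderiv ℝ (g i) ((w + s • e) - z.2 i) e)
        = ∑ i, fderiv ℝ (g i) ((w + s • e) - z.2 i) e
            * ∏ k ∈ univ.erase i, g k ((w + s • e) - z.2 k) :=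
      Finset.sum_congr rfl fun i _ => mul_comm _ _
    rw [hsc]
  -- support sets and bounds
  obtain ⟨C₀, hC₀⟩ := hg₀s.exists_bound_of_continuous hg₀.continuous
  obtain ⟨D₀, hD₀⟩ := (hcs_fderiv_apply hg₀s e).exists_bound_of_continuous (cont_fderiv_apply hg₀ e)
  choose C hC using fun i => (hgs i).exists_bound_of_continuous (hg i).continuous
  choose D hD using fun i =>
    (hcs_fderiv_apply (hgs i) e).exists_bound_of_continuous (cont_fderiv_apply (hg i) e)
  have hC₀' : ∀ x, |g₀ x| ≤ C₀ := fun x => by simpa [Real.norm_eq_abs] using hC₀ x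
  have hD₀' : ∀ x, |fderiv ℝ g₀ x e| ≤ D₀ := fun x => by simpa [Real.norm_eq_abs] using hD₀ x
  have hC' : ∀ i x, |g i x| ≤ C i := fun i x => by simpa [Real.norm_eq_abs] using hC i x
  have hD' : ∀ i x, |fderiv ℝ (g i) x e| ≤ D i := fun i x => by
    simpa [Real.norm_eq_abs] using hD i x
  have hC₀0 : 0 ≤ C₀ := le_trans (abs_nonneg _) (hC₀' 0)
  have hD₀0 : 0 ≤ D₀ := le_trans (abs_nonneg _) (hD₀' 0)
  have hC0 : ∀ i, 0 ≤ C i := fun i => le_trans (abs_nonneg _) (hC' i 0)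
  have hD0 : ∀ i, 0 ≤ D i := fun i => le_trans (abs_nonneg _) (hD' i 0)
  have hM0 : 0 ≤ M := le_trans (abs_nonneg _) (hQbd 0)
  set S₀ : Set PP := (fun p : ℝ × PP => p.1 • e + p.2 + w) ''
    (Set.Icc (-1 : ℝ) 1 ×ˢ tsupport g₀) with hS₀def
  set S : Fin n → Set PP := fun i => (fun p : ℝ × PP => p.1 • e + w - p.2) ''
    (Set.Icc (-1 : ℝ) 1 ×ˢ tsupport (g i)) with hSdef
  have hS₀c : IsCompact S₀ := (isCompact_Icc.prod hg₀s).image (by fun_prop)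
  have hSc : ∀ i, IsCompact (S i) := fun i => (isCompact_Icc.prod (hgs i)).image (by fun_prop)
  have hmem₀ : ∀ s : ℝ, |s| ≤ 1 → ∀ x : PP, x - (w + s • e) ∈ tsupport g₀ → x ∈ S₀ := by
    intro s hs x hx
    exact ⟨(s, x - (w + s • e)), Set.mk_mem_prod (Set.mem_Icc.2 (abs_le.1 hs)) hx, by
      show s • e + (x - (w + s • e)) + w = x; module⟩
  have hmemi : ∀ s : ℝ, |s| ≤ 1 → ∀ i (x : PP), (w + s • e) - x ∈ tsupport (g i) → x ∈ S i := by
    intro s hs i x hx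
    exact ⟨(s, (w + s • e) - x), Set.mk_mem_prod (Set.mem_Icc.2 (abs_le.1 hs)) hx, by
      show s • e + w - (w + s • e - x) = x; module⟩
  set B : ℝ := M * (D₀ * ∏ i, C i + C₀ * ∑ i, D i * ∏ k ∈ univ.erase i, C k) with hBdef
  set bound : SP n → ℝ := (S₀ ×ˢ Set.univ.pi S).indicator fun _ => B with hbddef
  have hFbd : ∀ z : SP n, ∀ s : ℝ, |s| ≤ 1 → ‖F' s z‖ ≤ bound z := by
    intro z s hs
    by_cases hz : z ∈ S₀ ×ˢ Set.univ.pi S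
    · rw [hbddef, Set.indicator_of_mem hz]
      have hP : |∏ i, g i ((w + s • e) - z.2 i)| ≤ ∏ i, C i := by
        rw [Finset.abs_prod]
        exact Finset.prod_le_prod (fun i _ => abs_nonneg _) (fun i _ => hC' i _)
      have hSm : |∑ i, fderiv ℝ (g i) ((w + s • e) - z.2 i) e
          * ∏ k ∈ univ.erase i, g k ((w + s • e) - z.2 k)|
          ≤ ∑ i, D i * ∏ k ∈ univ.erase i, C k := by
        refine (Finset.abs_sum_le_sum_abs _ _).trans (Finset.sum_le_sum fun i _ => ?_)
        rw [abs_mul, Finset.abs_prod]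
        exact mul_le_mul (hD' i _)
          (Finset.prod_le_prod (fun k _ => abs_nonneg _) (fun k _ => hC' k _))
          (Finset.prod_nonneg fun k _ => abs_nonneg _) (hD0 i)
      calc ‖F' s z‖
          = |Q z| * |(-(fderiv ℝ g₀ (z.1 - (w + s • e)) e)) * ∏ i, g i ((w + s • e) - z.2 i)
            + g₀ (z.1 - (w + s • e)) * ∑ i, fderiv ℝ (g i) ((w + s • e) - z.2 i) e
              * ∏ k ∈ univ.erase i, g k ((w + s • e) - z.2 k)| := by
            rw [hF'def]; rw [Real.norm_eq_abs, abs_mul]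
        _ ≤ M * (D₀ * ∏ i, C i + C₀ * ∑ i, D i * ∏ k ∈ univ.erase i, C k) := by
            refine mul_le_mul (hQbd z) ((abs_add_le _ _).trans ?_) (abs_nonneg _) hM0
            rw [abs_mul, abs_mul, abs_neg]
            exact add_le_add
              (mul_le_mul (hD₀' _) hP (abs_nonneg _) hD₀0)
              (mul_le_mul (hC₀' _) hSm (abs_nonneg _) hC₀0)
        _ = B := rfl
    · rw [hbddef, Set.indicator_of_notMem hz]
      have hzz : z.1 ∉ S₀ ∨ ∃ i, z.2 i ∉ S i := by
        by_contra hcon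
        push_neg at hcon
        exact hz (Set.mem_prod.2 ⟨hcon.1, Set.mem_univ_pi.2 fun i => hcon.2 i⟩)
      have hF'z : F' s z = 0 := by
        rcases hzz with h1 | ⟨i, hi⟩
        · have harg : z.1 - (w + s • e) ∉ tsupport g₀ := fun hmem => h1 (hmem₀ s hs _ hmem)
          have e1 : g₀ (z.1 - (w + s • e)) = 0 := image_eq_zero_of_notMem_tsupport harg
          have e2 : fderiv ℝ g₀ (z.1 - (w + s • e)) e = 0 := fderiv_apply_zero_outside harg e
          rw [hF'def]; simp [e1, e2]
        · have harg : (w + s • e) - z.2 i ∉ tsupport (g i) := fun hmem =>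
            hi (hmemi s hs i _ hmem)
          have e1 : g i ((w + s • e) - z.2 i) = 0 := image_eq_zero_of_notMem_tsupport harg
          have e2 : fderiv ℝ (g i) ((w + s • e) - z.2 i) e = 0 :=
            fderiv_apply_zero_outside harg e
          have hprod0 : ∏ j, g j ((w + s • e) - z.2 j) = 0 :=
            Finset.prod_eq_zero (mem_univ i) e1
          have hsum0 : ∑ j, fderiv ℝ (g j) ((w + s • e) - z.2 j) e
              * ∏ k ∈ univ.erase j, g k ((w + s • e) - z.2 k) = 0 := by
            refine Finset.sum_eq_zero fun j _ => ?_
            rcases eq_or_ne j i with hji | hji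
            · subst hji; rw [e2, zero_mul]
            · rw [Finset.prod_eq_zero (Finset.mem_erase.2 ⟨hji.symm, mem_univ i⟩) e1, mul_zero]
          rw [hF'def]; simp [hprod0, hsum0]
      rw [hF'z]; simp
  have hmeasS : MeasurableSet (S₀ ×ˢ Set.univ.pi S) :=
    (hS₀c.isClosed.measurableSet).prod
      (MeasurableSet.univ_pi fun i => (hSc i).isClosed.measurableSet)
  have hbound_int : Integrable bound := by
    rw [hbddef, integrable_indicator_iff hmeasS]
    exact integrableOn_const ((hS₀c.prod (isCompact_univ_pi hSc)).measure_lt_top.ne)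
  have hFcont : ∀ s : ℝ, Continuous (F s) := fun s =>
    hQcont.mul (cont_shape hg₀.continuous (fun i => (hg i).continuous) (w + s • e) (w + s • e))
  have hF'cont : Continuous (F' 0) := by
    rw [hF'def]
    apply hQcont.mul
    apply Continuous.add
    · exact (((cont_fderiv_apply hg₀ e).comp
        (continuous_fst.sub continuous_const)).neg).mul
        (continuous_finset_prod _ fun i _ =>
          (hg i).continuous.comp (continuous_const.sub ((continuous_apply i).comp continuous_snd)))
    · exact (hg₀.continuous.comp (continuous_fst.sub continuous_const)).mul
        (continuous_finset_sum _ fun i _ =>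
          ((cont_fderiv_apply (hg i) e).comp
            (continuous_const.sub ((continuous_apply i).comp continuous_snd))).mul
          (continuous_finset_prod _ fun k _ =>
            (hg k).continuous.comp (continuous_const.sub ((continuous_apply k).comp continuous_snd))))
  have hFint0 : Integrable (F 0) :=
    integrable_shape hQcont hQbd hg₀.continuous hg₀s (fun i => (hg i).continuous) hgs
      (w + (0:ℝ) • e) (w + (0:ℝ) • e)
  have key := hasDerivAt_integral_of_dominated_loc_of_deriv_le (μ := (volume : Measure (SP n)))
    (F := F) (F' := F') (x₀ := (0:ℝ)) (bound := bound) (Metric.ball_mem_nhds (0:ℝ) one_pos)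
    (Filter.Eventually.of_forall fun s => (hFcont s).aestronglyMeasurable)
    hFint0 (hF'cont.aestronglyMeasurable)
    (MeasureTheory.ae_of_all _ fun z s hs => hFbd z s (le_of_lt (by
      simpa [Real.dist_eq] using hs)))
    hbound_int
    (MeasureTheory.ae_of_all _ fun z s _ => hder z s)
  have hzero : ∫ z, F' 0 z = 0 := by
    have h2 : HasDerivAt (fun s : ℝ => ∫ z, F s z) 0 0 := by
      have heq : (fun s : ℝ => ∫ z, F s z) = fun _ => ∫ z, F 0 z := funext hconst
      rw [heq]; exact hasDerivAt_const _ _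
    exact key.2.unique h2
  -- split the integral
  set p : PP := w + (0:ℝ) • e with hpdef
  have hQAint : Integrable (fun z : SP n =>
      Q z * (fderiv ℝ g₀ (z.1 - p) e * ∏ i, g i (p - z.2 i))) :=
    integrable_shape hQcont hQbd (cont_fderiv_apply hg₀ e) (hcs_fderiv_apply hg₀s e)
      (fun i => (hg i).continuous) hgs p p
  have hQBint : Integrable (fun z : SP n =>
      Q z * (g₀ (z.1 - p) * ∑ i, fderiv ℝ (g i) (p - z.2 i) e
        * ∏ k ∈ univ.erase i, g k (p - z.2 k))) := by
    have heq : (fun z : SP n =>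
        Q z * (g₀ (z.1 - p) * ∑ i, fderiv ℝ (g i) (p - z.2 i) e
          * ∏ k ∈ univ.erase i, g k (p - z.2 k)))
        = fun z => ∑ i, Q z * (g₀ (z.1 - p) *
            ∏ k, Function.update g i (fun x => fderiv ℝ (g i) x e) k (p - z.2 k)) := by
      funext z
      rw [Finset.mul_sum, Finset.mul_sum]
      refine Finset.sum_congr rfl fun i _ => ?_
      rw [prod_update_eq]
    rw [heq]
    exact integrable_finset_sum _ fun i _ =>
      integrable_shape hQcont hQbd hg₀.continuous hg₀s
        (update_prop (P := Continuous) (fun j => (hg j).continuous)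
          (cont_fderiv_apply (hg i) e))
        (update_prop (P := HasCompactSupport) hgs (hcs_fderiv_apply (hgs i) e)) p p
  have hsplit : (∫ z : SP n, Q z * (g₀ (z.1 - p) * ∑ i, fderiv ℝ (g i) (p - z.2 i) e
        * ∏ k ∈ univ.erase i, g k (p - z.2 k)))
      - ∫ z : SP n, Q z * (fderiv ℝ g₀ (z.1 - p) e * ∏ i, g i (p - z.2 i)) = 0 := by
    rw [← integral_sub hQBint hQAint, ← hzero]
    congr 1
    funext z
    rw [hF'def, hpdef]
    ring
  have hfin : (∫ z : SP n, Q z * (fderiv ℝ g₀ (z.1 - p) e * ∏ i, g i (p - z.2 i)))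
      = ∫ z : SP n, Q z * (g₀ (z.1 - p) * ∑ i, fderiv ℝ (g i) (p - z.2 i) e
        * ∏ k ∈ univ.erase i, g k (p - z.2 k)) := by linarith
  have hpw : p = w := by rw [hpdef]; module
  rw [hpw] at hfin
  exact hfin

noncomputable def Jf {n : ℕ} (Q : SP n → ℝ) (w : PP) (a : PP → ℝ) (b : Fin n → PP → ℝ) : ℝ :=
  ∫ z : SP n, Q z * (a (z.1 - w) * ∏ i, b i (w - z.2 i))

lemma lemAJ {n : ℕ} {Q : SP n → ℝ} {M : ℝ}
    (hQbd : ∀ z, |Q z| ≤ M) (hQcont : Continuous Q)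
    (hQinv : ∀ (h z₀ : PP) (zz : Fin n → PP), Q (z₀ + h, fun i => zz i + h) = Q (z₀, zz))
    (e w : PP) {g₀ : PP → ℝ} {g : Fin n → PP → ℝ}
    (hg₀ : ContDiff ℝ 1 g₀) (hg₀s : HasCompactSupport g₀)
    (hg : ∀ i, ContDiff ℝ 1 (g i)) (hgs : ∀ i, HasCompactSupport (g i)) :
    Jf Q w (fun x => fderiv ℝ g₀ x e) g
      = ∑ i, Jf Q w g₀ (Function.update g i fun x => fderiv ℝ (g i) x e) := by
  have h1 : Jf Q w (fun x => fderiv ℝ g₀ x e) g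
      = ∫ z : SP n, Q z * (fderiv ℝ g₀ (z.1 - w) e * ∏ i, g i (w - z.2 i)) := rfl
  rw [h1, lemA hQbd hQcont hQinv e w hg₀ hg₀s hg hgs]
  have heq : (fun z : SP n => Q z * (g₀ (z.1 - w) * ∑ i, fderiv ℝ (g i) (w - z.2 i) e
        * ∏ k ∈ univ.erase i, g k (w - z.2 k)))
      = fun z => ∑ i, Q z * (g₀ (z.1 - w) *
          ∏ k, Function.update g i (fun x => fderiv ℝ (g i) x e) k (w - z.2 k)) := by
    funext z
    rw [Finset.mul_sum, Finset.mul_sum]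
    refine Finset.sum_congr rfl fun i _ => ?_
    rw [prod_update_eq]
  rw [heq, integral_finset_sum _ (fun i _ => integrable_shape hQcont hQbd hg₀.continuous hg₀s
    (update_prop (P := Continuous) (fun j => (hg j).continuous) (cont_fderiv_apply (hg i) e))
    (update_prop (P := HasCompactSupport) hgs (hcs_fderiv_apply (hgs i) e)) w w)]
  rfl

lemma schwarz_aux {f : PP → ℝ} (hf : ContDiff ℝ 2 f) (u v : PP) :
    (fun x => fderiv ℝ (fun y => fderiv ℝ f y v) x u)
      = fun x => fderiv ℝ (fun y => fderiv ℝ f y u) x v := by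
  funext x
  have hd : ∀ y, HasFDerivAt f (fderiv ℝ f y) y := fun y =>
    (hf.differentiable (by norm_num) y).hasFDerivAt
  have hdiff : DifferentiableAt ℝ (fderiv ℝ f) x :=
    ((hf.fderiv_right (m := 1) (by norm_num)).differentiable one_ne_zero) x
  have hd2 : HasFDerivAt (fderiv ℝ f) (fderiv ℝ (fderiv ℝ f) x) x := hdiff.hasFDerivAt
  have happ : ∀ (v u : PP), fderiv ℝ (fun y => fderiv ℝ f y v) x u
      = fderiv ℝ (fderiv ℝ f) x u v := by
    intro v u
    rw [fderiv_clm_apply hdiff (differentiableAt_const v)]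
    simp
  rw [happ, happ, second_derivative_symmetric hd hd2 u v]

lemma erase_swap {n : ℕ} (i j : Fin n) :
    ((univ : Finset (Fin n)).erase i).erase j = (univ.erase j).erase i := by
  ext k
  simp only [Finset.mem_erase, Finset.mem_univ, and_true]
  tauto

theorem stmt7 (n : ℕ) (hn : 1 ≤ n) (c : ℝ)
    (K₀ : ℝ × ℝ → ℝ) (K : Fin n → ℝ × ℝ → ℝ)
    (hK₀ : ContDiff ℝ 2 K₀) (hK₀supp : HasCompactSupport K₀)
    (hK : ∀ i, ContDiff ℝ 2 (K i)) (hKsupp : ∀ i, HasCompactSupport (K i))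
    (Q : (ℝ × ℝ) × (Fin n → ℝ × ℝ) → ℝ) (M : ℝ)
    (hQbd : ∀ z, |Q z| ≤ M) (hQcont : Continuous Q)
    (hQinv : ∀ (h z₀ : ℝ × ℝ) (zz : Fin n → ℝ × ℝ),
      Q (z₀ + h, fun i => zz i + h) = Q (z₀, zz)) :
    ∀ w : ℝ × ℝ,
      (∫ z : (ℝ × ℝ) × (Fin n → ℝ × ℝ),
          Q z * (px K₀ (z.1 - w)
            * ∑ i, Lop c (K i) (w - z.2 i) * ∏ k ∈ univ.erase i, K k (w - z.2 k)))
      = (∫ z : (ℝ × ℝ) × (Fin n → ℝ × ℝ),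
            Q z * (Lop c K₀ (z.1 - w)
              * ∑ i, px (K i) (w - z.2 i) * ∏ k ∈ univ.erase i, K k (w - z.2 k)))
        + c * ∫ z : (ℝ × ℝ) × (Fin n → ℝ × ℝ),
            Q z * (px K₀ (z.1 - w) * ∑ i, ∑ j ∈ univ.erase i,
              px (K i) (w - z.2 i) * px (K j) (w - z.2 j)
                * ∏ k ∈ (univ.erase i).erase j, K k (w - z.2 k)) := by
  intro w
  classical
  -- regularity facts
  have hK1 : ∀ i, ContDiff ℝ 1 (K i) := fun i => (hK i).of_le one_le_two
  have hK₀1 : ContDiff ℝ 1 K₀ := hK₀.of_le one_le_two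
  have hpxK₀1 : ContDiff ℝ 1 (px K₀) :=
    (hK₀.fderiv_right (m := 1) (by norm_num)).clm_apply contDiff_const
  have hptK₀1 : ContDiff ℝ 1 (pt K₀) :=
    (hK₀.fderiv_right (m := 1) (by norm_num)).clm_apply contDiff_const
  have hpxK₀s : HasCompactSupport (px K₀) := hcs_fderiv_apply hK₀supp (0, 1)
  have hptK₀s : HasCompactSupport (pt K₀) := hcs_fderiv_apply hK₀supp (1, 0)
  have hpxK1 : ∀ i, ContDiff ℝ 1 (px (K i)) := fun i =>
    ((hK i).fderiv_right (m := 1) (by norm_num)).clm_apply contDiff_const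
  have hpxKs : ∀ i, HasCompactSupport (px (K i)) := fun i => hcs_fderiv_apply (hKsupp i) (0, 1)
  have hKc : ∀ i, Continuous (K i) := fun i => (hK i).continuous
  have hpxKc : ∀ i, Continuous (px (K i)) := fun i => cont_fderiv_apply (hK1 i) (0, 1)
  have hptKc : ∀ i, Continuous (pt (K i)) := fun i => cont_fderiv_apply (hK1 i) (1, 0)
  have hptKs : ∀ i, HasCompactSupport (pt (K i)) := fun i => hcs_fderiv_apply (hKsupp i) (1, 0)
  have hpxpxKc : ∀ i, Continuous (px (px (K i))) := fun i => cont_fderiv_apply (hpxK1 i) (0, 1)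
  have hpxpxKs : ∀ i, HasCompactSupport (px (px (K i))) := fun i =>
    hcs_fderiv_apply (hpxKs i) (0, 1)
  have hpxK₀c : Continuous (px K₀) := cont_fderiv_apply hK₀1 (0, 1)
  have hptK₀c : Continuous (pt K₀) := cont_fderiv_apply hK₀1 (1, 0)
  have hpxpxK₀c : Continuous (px (px K₀)) := cont_fderiv_apply hpxK₀1 (0, 1)
  have hpxpxK₀s : HasCompactSupport (px (px K₀)) := hcs_fderiv_apply hpxK₀s (0, 1)
  -- integrability of all the basic pieces
  have hintA : ∀ i : Fin n, Integrable (fun z : SP n =>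
      Q z * (px K₀ (z.1 - w) * ∏ k, Function.update K i (pt (K i)) k (w - z.2 k))) := fun i =>
    integrable_shape hQcont hQbd hpxK₀c hpxK₀s
      (update_prop (P := Continuous) hKc (hptKc i))
      (update_prop (P := HasCompactSupport) hKsupp (hptKs i)) w w
  have hintB : ∀ i : Fin n, Integrable (fun z : SP n =>
      Q z * (px K₀ (z.1 - w) * ∏ k, Function.update K i (px (px (K i))) k (w - z.2 k))) := fun i =>
    integrable_shape hQcont hQbd hpxK₀c hpxK₀s
      (update_prop (P := Continuous) hKc (hpxpxKc i))
      (update_prop (P := HasCompactSupport) hKsupp (hpxpxKs i)) w w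
  have hintC : ∀ i : Fin n, Integrable (fun z : SP n =>
      Q z * (pt K₀ (z.1 - w) * ∏ k, Function.update K i (px (K i)) k (w - z.2 k))) := fun i =>
    integrable_shape hQcont hQbd hptK₀c hptK₀s
      (update_prop (P := Continuous) hKc (hpxKc i))
      (update_prop (P := HasCompactSupport) hKsupp (hpxKs i)) w w
  have hintD : ∀ i : Fin n, Integrable (fun z : SP n =>
      Q z * (px (px K₀) (z.1 - w) * ∏ k, Function.update K i (px (K i)) k (w - z.2 k))) := fun i =>
    integrable_shape hQcont hQbd hpxpxK₀c hpxpxK₀s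
      (update_prop (P := Continuous) hKc (hpxKc i))
      (update_prop (P := HasCompactSupport) hKsupp (hpxKs i)) w w
  have hintE : ∀ i j : Fin n, Integrable (fun z : SP n =>
      Q z * (px K₀ (z.1 - w) *
        ∏ k, Function.update (Function.update K i (px (K i))) j (px (K j)) k (w - z.2 k))) :=
    fun i j =>
    integrable_shape hQcont hQbd hpxK₀c hpxK₀s
      (update_prop (P := Continuous) (update_prop (P := Continuous) hKc (hpxKc i)) (hpxKc j))
      (update_prop (P := HasCompactSupport)
        (update_prop (P := HasCompactSupport) hKsupp (hpxKs i)) (hpxKs j)) w w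
  -- rewrite LHS of the goal
  have hLHS : (∫ z : SP n, Q z * (px K₀ (z.1 - w)
        * ∑ i, Lop c (K i) (w - z.2 i) * ∏ k ∈ univ.erase i, K k (w - z.2 k)))
      = (∑ i, Jf Q w (px K₀) (Function.update K i (pt (K i))))
        - c * ∑ i, Jf Q w (px K₀) (Function.update K i (px (px (K i)))) := by
    have h1 : (fun z : SP n => Q z * (px K₀ (z.1 - w)
          * ∑ i, Lop c (K i) (w - z.2 i) * ∏ k ∈ univ.erase i, K k (w - z.2 k)))
        = fun z => ∑ i,
            (Q z * (px K₀ (z.1 - w) * ∏ k, Function.update K i (pt (K i)) k (w - z.2 k))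
            - c * (Q z * (px K₀ (z.1 - w)
                * ∏ k, Function.update K i (px (px (K i))) k (w - z.2 k)))) := by
      funext z
      simp only [Lop, Finset.mul_sum, prod_update_eq]
      exact Finset.sum_congr rfl fun i _ => by ring
    have hintAB : ∀ i : Fin n, Integrable (fun z : SP n =>
        Q z * (px K₀ (z.1 - w) * ∏ k, Function.update K i (pt (K i)) k (w - z.2 k))
        - c * (Q z * (px K₀ (z.1 - w)
            * ∏ k, Function.update K i (px (px (K i))) k (w - z.2 k)))) := fun i =>
      (hintA i).sub ((hintB i).const_mul c)
    rw [h1, integral_finset_sum _ (fun i _ => hintAB i)]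
    have hterm : ∀ i ∈ (univ : Finset (Fin n)),
        (∫ z : SP n,
          (Q z * (px K₀ (z.1 - w) * ∏ k, Function.update K i (pt (K i)) k (w - z.2 k))
          - c * (Q z * (px K₀ (z.1 - w)
              * ∏ k, Function.update K i (px (px (K i))) k (w - z.2 k)))))
        = Jf Q w (px K₀) (Function.update K i (pt (K i)))
          - c * Jf Q w (px K₀) (Function.update K i (px (px (K i)))) := by
      intro i _
      rw [integral_sub (hintA i) ((hintB i).const_mul c), integral_const_mul c _]
      rfl
    rw [Finset.sum_congr rfl hterm, Finset.sum_sub_distrib, ← Finset.mul_sum]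
  -- rewrite first RHS integral
  have hRHS1 : (∫ z : SP n, Q z * (Lop c K₀ (z.1 - w)
        * ∑ i, px (K i) (w - z.2 i) * ∏ k ∈ univ.erase i, K k (w - z.2 k)))
      = (∑ i, Jf Q w (pt K₀) (Function.update K i (px (K i))))
        - c * ∑ i, Jf Q w (px (px K₀)) (Function.update K i (px (K i))) := by
    have h1 : (fun z : SP n => Q z * (Lop c K₀ (z.1 - w)
          * ∑ i, px (K i) (w - z.2 i) * ∏ k ∈ univ.erase i, K k (w - z.2 k)))
        = fun z => ∑ i,
            (Q z * (pt K₀ (z.1 - w) * ∏ k, Function.update K i (px (K i)) k (w - z.2 k))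
            - c * (Q z * (px (px K₀) (z.1 - w)
                * ∏ k, Function.update K i (px (K i)) k (w - z.2 k)))) := by
      funext z
      simp only [Lop, Finset.mul_sum, prod_update_eq]
      exact Finset.sum_congr rfl fun i _ => by ring
    have hintCD : ∀ i : Fin n, Integrable (fun z : SP n =>
        Q z * (pt K₀ (z.1 - w) * ∏ k, Function.update K i (px (K i)) k (w - z.2 k))
        - c * (Q z * (px (px K₀) (z.1 - w)
            * ∏ k, Function.update K i (px (K i)) k (w - z.2 k)))) := fun i =>
      (hintC i).sub ((hintD i).const_mul c)
    rw [h1, integral_finset_sum _ (fun i _ => hintCD i)]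
    have hterm : ∀ i ∈ (univ : Finset (Fin n)),
        (∫ z : SP n,
          (Q z * (pt K₀ (z.1 - w) * ∏ k, Function.update K i (px (K i)) k (w - z.2 k))
          - c * (Q z * (px (px K₀) (z.1 - w)
              * ∏ k, Function.update K i (px (K i)) k (w - z.2 k)))))
        = Jf Q w (pt K₀) (Function.update K i (px (K i)))
          - c * Jf Q w (px (px K₀)) (Function.update K i (px (K i))) := by
      intro i _
      rw [integral_sub (hintC i) ((hintD i).const_mul c), integral_const_mul c _]
      rfl
    rw [Finset.sum_congr rfl hterm, Finset.sum_sub_distrib, ← Finset.mul_sum]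
  -- rewrite second RHS integral
  have hRHS2 : (∫ z : SP n, Q z * (px K₀ (z.1 - w) * ∑ i, ∑ j ∈ univ.erase i,
        px (K i) (w - z.2 i) * px (K j) (w - z.2 j)
          * ∏ k ∈ (univ.erase i).erase j, K k (w - z.2 k)))
      = ∑ i, ∑ j ∈ univ.erase i,
          Jf Q w (px K₀)
            (Function.update (Function.update K i (px (K i))) j (px (K j))) := by
    have h2 : (fun z : SP n => Q z * (px K₀ (z.1 - w) * ∑ i, ∑ j ∈ univ.erase i,
          px (K i) (w - z.2 i) * px (K j) (w - z.2 j)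
            * ∏ k ∈ (univ.erase i).erase j, K k (w - z.2 k)))
        = fun z => ∑ i, ∑ j ∈ univ.erase i, Q z * (px K₀ (z.1 - w) *
            ∏ k, Function.update (Function.update K i (px (K i))) j (px (K j)) k (w - z.2 k)) := by
      funext z
      simp only [Finset.mul_sum]
      refine Finset.sum_congr rfl fun i _ => ?_
      refine Finset.sum_congr rfl fun j hj => ?_
      have hji : j ≠ i := (Finset.mem_erase.1 hj).1
      rw [prod_update_eq, prod_update_eq_erase K i j (Ne.symm hji), erase_swap]
      ring
    rw [h2, integral_finset_sum _ (fun i _ => integrable_finset_sum _ fun j _ => hintE i j)]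
    refine Finset.sum_congr rfl fun i _ => ?_
    rw [integral_finset_sum _ (fun j _ => hintE i j)]
    rfl
  -- the three instances of the integration-by-parts lemma
  have EA : Jf Q w (pt (px K₀)) K
      = ∑ i, Jf Q w (px K₀) (Function.update K i (pt (K i))) :=
    lemAJ hQbd hQcont hQinv (1, 0) w hpxK₀1 hpxK₀s hK1 hKsupp
  have EB : Jf Q w (px (pt K₀)) K
      = ∑ i, Jf Q w (pt K₀) (Function.update K i (px (K i))) :=
    lemAJ hQbd hQcont hQinv (0, 1) w hptK₀1 hptK₀s hK1 hKsupp
  have hsch : pt (px K₀) = px (pt K₀) := schwarz_aux hK₀ (1, 0) (0, 1)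
  have EC : ∀ i, Jf Q w (px (px K₀)) (Function.update K i (px (K i)))
      = Jf Q w (px K₀) (Function.update K i (px (px (K i))))
        + ∑ j ∈ univ.erase i, Jf Q w (px K₀)
            (Function.update (Function.update K i (px (K i))) j (px (K j))) := by
    intro i
    have h := lemAJ (g := Function.update K i (px (K i))) hQbd hQcont hQinv (0, 1) w hpxK₀1
      hpxK₀s (update_prop (P := ContDiff ℝ 1) (i := i) hK1 (hpxK1 i))
      (update_prop (P := HasCompactSupport) (i := i) hKsupp (hpxKs i))
    rw [show Jf Q w (fun x => fderiv ℝ (px K₀) x (0, 1)) (Function.update K i (px (K i)))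
      = Jf Q w (px (px K₀)) (Function.update K i (px (K i))) from rfl] at h
    rw [h, ← Finset.add_sum_erase _ _ (mem_univ i)]
    congr 1
    · simp only [Function.update_idem, Function.update_self]
      rfl
    · refine Finset.sum_congr rfl fun j hj => ?_
      have hji : j ≠ i := (Finset.mem_erase.1 hj).1
      simp only [Function.update_of_ne hji]
      rfl
  -- combine everything
  rw [hLHS, hRHS1, hRHS2]
  have R1 : ∑ i, Jf Q w (px K₀) (Function.update K i (pt (K i)))
      = ∑ i, Jf Q w (pt K₀) (Function.update K i (px (K i))) := by
    rw [← EA, hsch, EB]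
  have R2 : ∑ i, Jf Q w (px (px K₀)) (Function.update K i (px (K i)))
      = (∑ i, Jf Q w (px K₀) (Function.update K i (px (px (K i)))))
        + ∑ i, ∑ j ∈ univ.erase i, Jf Q w (px K₀)
            (Function.update (Function.update K i (px (K i))) j (px (K j))) := by
    rw [Finset.sum_congr rfl fun i _ => EC i, Finset.sum_add_distrib]
  rw [R1, R2]
  ring
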